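/- arXiv:2605.13090 — 2 statements merged into one kernel-verified Lean document; each statement's English description precedes it below -/
import Mathlib

section
/- Fix n ≥ 3, k ≥ 1, nonzero y_0,…,y_{k−1}, z ∈ ℂ. Define n×n matrices B_i equal to the identity except in rows/columns i, i+1 where it is the block [[1, z],[0, −1]], and R_i^α equal to the identity except in rows/columns i, i+1 where it is [[0, 1/y_α],[y_α, 0]]. Then the assignment s_i ↦ B_i, ρ_i^α ↦ R_i^α satisfies all defining relations of M_kVT_n and hence defines a representation ζ_6 : M_kVT_n → GL_n(ℂ). -/
/-- Generators of the multi-virtual twin group `M_{k+1}VT_{m+2}`: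
`s i` for `i = 0, …, m` and `ρ i α` for `i = 0, …, m`, `α = 0, …, k`. -/
inductive MVTGen (m k : ℕ) : Type
  | s : Fin (m + 1) → MVTGen m k
  | rho : Fin (m + 1) → Fin (k + 1) → MVTGen m k

open FreeGroup in
/-- The defining relators of the multi-virtual twin group `M_{k+1}VT_{m+2}`. -/
def mvtRels (m k : ℕ) : Set (FreeGroup (MVTGen m k)) :=
  { r | (∃ i : Fin (m + 1), r = of (MVTGen.s i) * of (MVTGen.s i))
    ∨ (∃ i j : Fin (m + 1), (i.1 + 2 ≤ j.1 ∨ j.1 + 2 ≤ i.1) ∧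
        r = of (MVTGen.s i) * of (MVTGen.s j) * (of (MVTGen.s i))⁻¹ * (of (MVTGen.s j))⁻¹)
    ∨ (∃ (i : Fin (m + 1)) (α : Fin (k + 1)),
        r = of (MVTGen.rho i α) * of (MVTGen.rho i α))
    ∨ (∃ (i j : Fin (m + 1)) (α β : Fin (k + 1)), (i.1 + 2 ≤ j.1 ∨ j.1 + 2 ≤ i.1) ∧
        r = of (MVTGen.rho i α) * of (MVTGen.rho j β) *
            (of (MVTGen.rho i α))⁻¹ * (of (MVTGen.rho j β))⁻¹)
    ∨ (∃ (i j : Fin (m + 1)) (α : Fin (k + 1)), (i.1 + 2 ≤ j.1 ∨ j.1 + 2 ≤ i.1) ∧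
        r = of (MVTGen.rho i α) * of (MVTGen.s j) *
            (of (MVTGen.rho i α))⁻¹ * (of (MVTGen.s j))⁻¹)
    ∨ (∃ (i j : Fin (m + 1)) (α : Fin (k + 1)), j.1 = i.1 + 1 ∧
        r = of (MVTGen.rho i α) * of (MVTGen.rho j α) * of (MVTGen.rho i α) *
            (of (MVTGen.rho j α) * of (MVTGen.rho i α) * of (MVTGen.rho j α))⁻¹)
    ∨ (∃ (i j : Fin (m + 1)) (α β : Fin (k + 1)), j.1 = i.1 + 1 ∧ α.1 < β.1 ∧
        r = of (MVTGen.rho i α) * of (MVTGen.rho j β) * of (MVTGen.rho i β) *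
            (of (MVTGen.rho j β) * of (MVTGen.rho i β) * of (MVTGen.rho j α))⁻¹)
    ∨ (∃ (i j : Fin (m + 1)) (α β : Fin (k + 1)), j.1 = i.1 + 1 ∧ α.1 < β.1 ∧
        r = of (MVTGen.rho i α) * of (MVTGen.rho j α) * of (MVTGen.rho i β) *
            (of (MVTGen.rho j β) * of (MVTGen.rho i α) * of (MVTGen.rho j α))⁻¹)
    ∨ (∃ (i j : Fin (m + 1)) (α : Fin (k + 1)), j.1 = i.1 + 1 ∧
        r = of (MVTGen.rho i α) * of (MVTGen.rho j α) * of (MVTGen.s i) *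
            (of (MVTGen.s j) * of (MVTGen.rho i α) * of (MVTGen.rho j α))⁻¹) }

/-- The multi-virtual twin group `M_{k+1}VT_{m+2}`. -/
def MVT (m k : ℕ) : Type := PresentedGroup (mvtRels m k)

instance (m k : ℕ) : Group (MVT m k) := by unfold MVT; infer_instance

/-- The image in `M_{k+1}VT_{m+2}` of a generator. -/
def MVT.gen {m k : ℕ} (g : MVTGen m k) : MVT m k := PresentedGroup.of g

/-- The `n × n` matrix equal to the identity except for the `2 × 2` block
`[[a, b], [c, d]]` in rows and columns `i, i+1`. -/
def locMat (n : ℕ) (i : ℕ) (a b c d : ℂ) : Matrix (Fin n) (Fin n) ℂ :=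
  Matrix.of fun p q =>
    if p.1 = i ∧ q.1 = i then a
    else if p.1 = i ∧ q.1 = i + 1 then b
    else if p.1 = i + 1 ∧ q.1 = i then c
    else if p.1 = i + 1 ∧ q.1 = i + 1 then d
    else if p = q then 1 else 0


/-! ### Auxiliary lemmas for the proof -/

section LocMatAux

lemma locMat_mul {n i : ℕ} (h : i + 1 < n) (a b c d : ℂ)
    (M : Matrix (Fin n) (Fin n) ℂ) :
    locMat n i a b c d * M = Matrix.of (fun p q =>
      if p.1 = i then a * M ⟨i, by omega⟩ q + b * M ⟨i+1, h⟩ q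
      else if p.1 = i + 1 then c * M ⟨i, by omega⟩ q + d * M ⟨i+1, h⟩ q
      else M p q) := by
  ext p q
  rw [Matrix.mul_apply, Matrix.of_apply]
  by_cases hp : p.1 = i
  · have key : ∀ r : Fin n, locMat n i a b c d p r * M r q =
        (if r = (⟨i, by omega⟩ : Fin n) then a * M r q else 0) +
        (if r = (⟨i+1, h⟩ : Fin n) then b * M r q else 0) := by
      intro r
      simp only [locMat, Matrix.of_apply, Fin.ext_iff]
      split_ifs <;> first | (exfalso; omega) | ring1
    rw [Finset.sum_congr rfl fun r _ => key r, Finset.sum_add_distrib,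
      Finset.sum_ite_eq', Finset.sum_ite_eq']
    simp [hp]
  · by_cases hp' : p.1 = i + 1
    · have key : ∀ r : Fin n, locMat n i a b c d p r * M r q =
          (if r = (⟨i, by omega⟩ : Fin n) then c * M r q else 0) +
          (if r = (⟨i+1, h⟩ : Fin n) then d * M r q else 0) := by
        intro r
        simp only [locMat, Matrix.of_apply, Fin.ext_iff]
        split_ifs <;> first | (exfalso; omega) | ring1
      rw [Finset.sum_congr rfl fun r _ => key r, Finset.sum_add_distrib,
        Finset.sum_ite_eq', Finset.sum_ite_eq']
      simp [hp, hp']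
    · have key : ∀ r : Fin n, locMat n i a b c d p r * M r q =
          if r = p then M r q else 0 := by
        intro r
        simp only [locMat, Matrix.of_apply, Fin.ext_iff]
        split_ifs <;> first | (exfalso; omega) | ring1
      rw [Finset.sum_congr rfl fun r _ => key r, Finset.sum_ite_eq']
      simp [hp, hp']

set_option maxHeartbeats 1000000 in
lemma locMat_sq {n i : ℕ} (h : i + 1 < n) (a b c d : ℂ)
    (h1 : a*a + b*c = 1) (h2 : a*b + b*d = 0) (h3 : c*a + d*c = 0) (h4 : c*b + d*d = 1) :
    locMat n i a b c d * locMat n i a b c d = 1 := by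
  rw [locMat_mul h]
  ext p q
  simp only [Matrix.of_apply, locMat, Matrix.one_apply, Fin.ext_iff,
    eq_self_iff_true, true_and, and_true, and_false, false_and, if_true, if_false]
  split_ifs <;>
    first | (exfalso; omega) | ring1 | linear_combination h1 | linear_combination h2 |
      linear_combination h3 | linear_combination h4

set_option maxHeartbeats 2000000 in
lemma locMat_comm {n i j : ℕ} (hij : i + 2 ≤ j) (hj : j + 1 < n)
    (a b c d a' b' c' d' : ℂ) :
    locMat n i a b c d * locMat n j a' b' c' d' =
      locMat n j a' b' c' d' * locMat n i a b c d := by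
  have hi : i + 1 < n := by omega
  rw [locMat_mul hi, locMat_mul hj]
  ext p q
  have e1 : ¬ (i = j) := by omega
  have e2 : ¬ (i = j + 1) := by omega
  have e3 : ¬ (i + 1 = j) := by omega
  have e4 : ¬ (i + 1 = j + 1) := by omega
  have e5 : ¬ (j = i) := by omega
  have e6 : ¬ (j = i + 1) := by omega
  have e7 : ¬ (j + 1 = i) := by omega
  have e8 : ¬ (j + 1 = i + 1) := by omega
  simp only [Matrix.of_apply, locMat, Fin.ext_iff, eq_self_iff_true, true_and, and_true,
    false_and, and_false, if_true, if_false, e1, e2, e3, e4, e5, e6, e7, e8]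
  by_cases hp1 : (p:ℕ) = i <;> by_cases hq1 : (q:ℕ) = i <;>
  by_cases hp2 : (p:ℕ) = i + 1 <;> by_cases hq2 : (q:ℕ) = i + 1 <;>
  by_cases hp3 : (p:ℕ) = j <;> by_cases hq3 : (q:ℕ) = j <;>
  by_cases hp4 : (p:ℕ) = j + 1 <;> by_cases hq4 : (q:ℕ) = j + 1 <;>
    first
      | (exfalso; omega)
      | ((try simp_all [Fin.ext_iff]);
         all_goals first
           | (exfalso; omega)
           | (intros; exfalso; omega)
           | ring1
           | (split_ifs <;> first | (exfalso; omega) | ring1 | rfl | (field_simp))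
           | (field_simp))

set_option maxHeartbeats 2000000 in
lemma locMat_rel7 {n i : ℕ} (h2 : i + 2 < n) (u v : ℂ) :
    locMat n i 0 u⁻¹ u 0 * (locMat n (i+1) 0 v⁻¹ v 0 * locMat n i 0 v⁻¹ v 0) =
      locMat n (i+1) 0 v⁻¹ v 0 * (locMat n i 0 v⁻¹ v 0 * locMat n (i+1) 0 u⁻¹ u 0) := by
  have hi : i + 1 < n := by omega
  have hi1 : (i+1) + 1 < n := by omega
  simp only [locMat_mul hi, locMat_mul hi1]
  ext p q
  have e1 : ¬ (i = i + 1) := by omega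
  have e2 : ¬ (i = i + 1 + 1) := by omega
  have e3 : ¬ (i + 1 = i) := by omega
  have e4 : ¬ (i + 1 = i + 1 + 1) := by omega
  have e5 : ¬ (i + 1 + 1 = i) := by omega
  have e6 : ¬ (i + 1 + 1 = i + 1) := by omega
  simp only [Matrix.of_apply, locMat, Fin.ext_iff, eq_self_iff_true, true_and, and_true,
    false_and, and_false, if_true, if_false, e1, e2, e3, e4, e5, e6]
  by_cases hp1 : (p:ℕ) = i <;> by_cases hq1 : (q:ℕ) = i <;>
  by_cases hp2 : (p:ℕ) = i + 1 <;> by_cases hq2 : (q:ℕ) = i + 1 <;>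
  by_cases hp3 : (p:ℕ) = i + 1 + 1 <;> by_cases hq3 : (q:ℕ) = i + 1 + 1 <;>
    first
      | (exfalso; omega)
      | ((try simp_all [Fin.ext_iff]);
         all_goals first
           | (exfalso; omega)
           | (intros; exfalso; omega)
           | ring1
           | (split_ifs <;> first | (exfalso; omega) | ring1 | rfl | (field_simp))
           | (field_simp))

set_option maxHeartbeats 2000000 in
lemma locMat_rel8 {n i : ℕ} (h2 : i + 2 < n) (u v : ℂ) :
    locMat n i 0 u⁻¹ u 0 * (locMat n (i+1) 0 u⁻¹ u 0 * locMat n i 0 v⁻¹ v 0) =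
      locMat n (i+1) 0 v⁻¹ v 0 * (locMat n i 0 u⁻¹ u 0 * locMat n (i+1) 0 u⁻¹ u 0) := by
  have hi : i + 1 < n := by omega
  have hi1 : (i+1) + 1 < n := by omega
  simp only [locMat_mul hi, locMat_mul hi1]
  ext p q
  have e1 : ¬ (i = i + 1) := by omega
  have e2 : ¬ (i = i + 1 + 1) := by omega
  have e3 : ¬ (i + 1 = i) := by omega
  have e4 : ¬ (i + 1 = i + 1 + 1) := by omega
  have e5 : ¬ (i + 1 + 1 = i) := by omega
  have e6 : ¬ (i + 1 + 1 = i + 1) := by omega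
  simp only [Matrix.of_apply, locMat, Fin.ext_iff, eq_self_iff_true, true_and, and_true,
    false_and, and_false, if_true, if_false, e1, e2, e3, e4, e5, e6]
  by_cases hp1 : (p:ℕ) = i <;> by_cases hq1 : (q:ℕ) = i <;>
  by_cases hp2 : (p:ℕ) = i + 1 <;> by_cases hq2 : (q:ℕ) = i + 1 <;>
  by_cases hp3 : (p:ℕ) = i + 1 + 1 <;> by_cases hq3 : (q:ℕ) = i + 1 + 1 <;>
    first
      | (exfalso; omega)
      | ((try simp_all [Fin.ext_iff]);
         all_goals first
           | (exfalso; omega)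
           | (intros; exfalso; omega)
           | ring1
           | (split_ifs <;> first | (exfalso; omega) | ring1 | rfl | (field_simp))
           | (field_simp))

set_option maxHeartbeats 2000000 in
lemma locMat_rel9 {n i : ℕ} (h2 : i + 2 < n) (u z : ℂ) :
    locMat n i 0 u⁻¹ u 0 * (locMat n (i+1) 0 u⁻¹ u 0 * locMat n i 1 z 0 (-1)) =
      locMat n (i+1) 1 z 0 (-1) * (locMat n i 0 u⁻¹ u 0 * locMat n (i+1) 0 u⁻¹ u 0) := by
  have hi : i + 1 < n := by omega
  have hi1 : (i+1) + 1 < n := by omega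
  simp only [locMat_mul hi, locMat_mul hi1]
  ext p q
  have e1 : ¬ (i = i + 1) := by omega
  have e2 : ¬ (i = i + 1 + 1) := by omega
  have e3 : ¬ (i + 1 = i) := by omega
  have e4 : ¬ (i + 1 = i + 1 + 1) := by omega
  have e5 : ¬ (i + 1 + 1 = i) := by omega
  have e6 : ¬ (i + 1 + 1 = i + 1) := by omega
  simp only [Matrix.of_apply, locMat, Fin.ext_iff, eq_self_iff_true, true_and, and_true,
    false_and, and_false, if_true, if_false, e1, e2, e3, e4, e5, e6]
  by_cases hp1 : (p:ℕ) = i <;> by_cases hq1 : (q:ℕ) = i <;>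
  by_cases hp2 : (p:ℕ) = i + 1 <;> by_cases hq2 : (q:ℕ) = i + 1 <;>
  by_cases hp3 : (p:ℕ) = i + 1 + 1 <;> by_cases hq3 : (q:ℕ) = i + 1 + 1 <;>
    first
      | (exfalso; omega)
      | ((try simp_all [Fin.ext_iff]);
         all_goals first
           | (exfalso; omega)
           | (intros; exfalso; omega)
           | ring1
           | (split_ifs <;> first | (exfalso; omega) | ring1 | rfl | (field_simp))
           | (field_simp))

/-- An involutory matrix as an element of `GL`. -/
def locInvol {n : ℕ} (M : Matrix (Fin n) (Fin n) ℂ) (h : M * M = 1) : GL (Fin n) ℂ :=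
  ⟨M, M, h, h⟩

@[simp] lemma locInvol_val {n : ℕ} (M : Matrix (Fin n) (Fin n) ℂ) (h : M * M = 1) :
    ((locInvol M h : GL (Fin n) ℂ) : Matrix (Fin n) (Fin n) ℂ) = M := rfl

end LocMatAux

/-- The assignment `sᵢ ↦` (identity except block `[[1, z],[0, -1]]` at rows/columns
`i, i+1`) and `ρᵢ^α ↦` (identity except block `[[0, 1/y_α],[y_α, 0]]`) satisfies all
defining relations of `M_{k+1}VT_{m+3}` and hence defines a representation
`ζ₆ : M_{k+1}VT_{m+3} → GL_{m+3}(ℂ)`. -/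
theorem mvt_rep_zeta6 (m k : ℕ) (y : Fin (k + 1) → ℂ) (hy : ∀ α, y α ≠ 0)
    (z : ℂ) (hz : z ≠ 0) :
    ∃ ζ : MVT (m + 1) k →* GL (Fin (m + 3)) ℂ,
      (∀ i : Fin (m + 2),
        ((ζ (MVT.gen (MVTGen.s i)) : GL (Fin (m + 3)) ℂ) :
          Matrix (Fin (m + 3)) (Fin (m + 3)) ℂ) = locMat (m + 3) i.1 1 z 0 (-1)) ∧
      (∀ (i : Fin (m + 2)) (α : Fin (k + 1)),
        ((ζ (MVT.gen (MVTGen.rho i α)) : GL (Fin (m + 3)) ℂ) :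
          Matrix (Fin (m + 3)) (Fin (m + 3)) ℂ) = locMat (m + 3) i.1 0 (y α)⁻¹ (y α) 0) := by
  have hS : ∀ i : Fin (m + 2),
      locMat (m + 3) i.1 1 z 0 (-1) * locMat (m + 3) i.1 1 z 0 (-1) = 1 := fun i =>
    locMat_sq (by omega) _ _ _ _ (by ring) (by ring) (by ring) (by ring)
  have hR : ∀ (i : Fin (m + 2)) (α : Fin (k + 1)),
      locMat (m + 3) i.1 0 (y α)⁻¹ (y α) 0 * locMat (m + 3) i.1 0 (y α)⁻¹ (y α) 0 = 1 :=
    fun i α => locMat_sq (by omega) _ _ _ _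
      (by simp [inv_mul_cancel₀ (hy α)]) (by ring) (by ring)
      (by simp [mul_inv_cancel₀ (hy α)])
  let f : MVTGen (m + 1) k → GL (Fin (m + 3)) ℂ := fun g =>
    match g with
    | MVTGen.s i => locInvol _ (hS i)
    | MVTGen.rho i α => locInvol _ (hR i α)
  have hf_s : ∀ i, f (MVTGen.s i) = locInvol _ (hS i) := fun i => rfl
  have hf_rho : ∀ i α, f (MVTGen.rho i α) = locInvol _ (hR i α) := fun i α => rfl
  have hrel : ∀ r ∈ mvtRels (m + 1) k, FreeGroup.lift f r = 1 := by
    intro r hr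
    simp only [mvtRels, Set.mem_setOf_eq] at hr
    obtain h | h | h | h | h | h | h | h | h := hr
    · -- s i * s i
      obtain ⟨i, rfl⟩ := h
      simp only [map_mul, FreeGroup.lift_apply_of, hf_s]
      exact Units.ext (hS i)
    · -- far commute s s
      obtain ⟨i, j, hij, rfl⟩ := h
      simp only [map_mul, map_inv, FreeGroup.lift_apply_of, hf_s]
      rw [mul_inv_eq_one, mul_inv_eq_iff_eq_mul]
      refine Units.ext ?_
      simp only [Units.val_mul, locInvol_val]
      rcases hij with hij | hij
      · exact locMat_comm hij (by omega) _ _ _ _ _ _ _ _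
      · exact (locMat_comm hij (by omega) _ _ _ _ _ _ _ _).symm
    · -- rho i α * rho i α
      obtain ⟨i, α, rfl⟩ := h
      simp only [map_mul, FreeGroup.lift_apply_of, hf_rho]
      exact Units.ext (hR i α)
    · -- far commute rho rho
      obtain ⟨i, j, α, β, hij, rfl⟩ := h
      simp only [map_mul, map_inv, FreeGroup.lift_apply_of, hf_rho]
      rw [mul_inv_eq_one, mul_inv_eq_iff_eq_mul]
      refine Units.ext ?_
      simp only [Units.val_mul, locInvol_val]
      rcases hij with hij | hij
      · exact locMat_comm hij (by omega) _ _ _ _ _ _ _ _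
      · exact (locMat_comm hij (by omega) _ _ _ _ _ _ _ _).symm
    · -- far commute rho s
      obtain ⟨i, j, α, hij, rfl⟩ := h
      simp only [map_mul, map_inv, FreeGroup.lift_apply_of, hf_rho, hf_s]
      rw [mul_inv_eq_one, mul_inv_eq_iff_eq_mul]
      refine Units.ext ?_
      simp only [Units.val_mul, locInvol_val]
      rcases hij with hij | hij
      · exact locMat_comm hij (by omega) _ _ _ _ _ _ _ _
      · exact (locMat_comm hij (by omega) _ _ _ _ _ _ _ _).symm
    · -- braid rho same α
      obtain ⟨i, j, α, hj, rfl⟩ := h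
      simp only [map_mul, map_inv, FreeGroup.lift_apply_of, hf_rho]
      rw [mul_inv_eq_one]
      refine Units.ext ?_
      simp only [Units.val_mul, locInvol_val]
      rw [hj, mul_assoc, mul_assoc]
      exact locMat_rel7 (by omega) (y α) (y α)
    · -- mixed relation 7
      obtain ⟨i, j, α, β, hj, hab, rfl⟩ := h
      simp only [map_mul, map_inv, FreeGroup.lift_apply_of, hf_rho]
      rw [mul_inv_eq_one]
      refine Units.ext ?_
      simp only [Units.val_mul, locInvol_val]
      rw [hj, mul_assoc, mul_assoc]
      exact locMat_rel7 (by omega) (y α) (y β)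
    · -- mixed relation 8
      obtain ⟨i, j, α, β, hj, hab, rfl⟩ := h
      simp only [map_mul, map_inv, FreeGroup.lift_apply_of, hf_rho]
      rw [mul_inv_eq_one]
      refine Units.ext ?_
      simp only [Units.val_mul, locInvol_val]
      rw [hj, mul_assoc, mul_assoc]
      exact locMat_rel8 (by omega) (y α) (y β)
    · -- key relation 9
      obtain ⟨i, j, α, hj, rfl⟩ := h
      simp only [map_mul, map_inv, FreeGroup.lift_apply_of, hf_rho, hf_s]
      rw [mul_inv_eq_one]
      refine Units.ext ?_
      simp only [Units.val_mul, locInvol_val]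
      rw [hj, mul_assoc, mul_assoc]
      exact locMat_rel9 (by omega) (y α) z
  refine ⟨PresentedGroup.toGroup hrel, fun i => ?_, fun i α => ?_⟩
  · show ((PresentedGroup.toGroup hrel (PresentedGroup.of (MVTGen.s i)) :
        GL (Fin (m + 3)) ℂ) : Matrix (Fin (m + 3)) (Fin (m + 3)) ℂ) = _
    rw [PresentedGroup.toGroup.of, hf_s i, locInvol_val]
  · show ((PresentedGroup.toGroup hrel (PresentedGroup.of (MVTGen.rho i α)) :
        GL (Fin (m + 3)) ℂ) : Matrix (Fin (m + 3)) (Fin (m + 3)) ℂ) = _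
    rw [PresentedGroup.toGroup.of, hf_rho i α, locInvol_val]
end

section
/- Let n ≥ 3, k ≥ 1 and let ζ_3 : M_kVT_n → GL_n(ℂ) be the representation sending s_i to the identity-except-block matrix with block diag(1, −1) at rows/columns i, i+1, and ρ_i^α to the identity-except-block matrix with block [[0, 1/y_α],[y_α, 0]]. Then for all 1 ≤ i ≤ n−2, the element s_i s_{i+1} s_i s_{i+1} lies in the kernel of ζ_3 but is a nontrivial element of M_kVT_n; hence ζ_3 is not injective. -/
section Aux

open Equiv

lemma swap_conj' {n : ℕ} (a b c d : Fin n) (h1 : c ≠ a) (h2 : c ≠ b) (h3 : d ≠ a) (h4 : d ≠ b) :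
    Equiv.swap a b * Equiv.swap c d * Equiv.swap a b = Equiv.swap c d := by
  have key : Equiv.swap a b * Equiv.swap c d * (Equiv.swap a b)⁻¹
      = Equiv.swap (Equiv.swap a b c) (Equiv.swap a b d) := (Equiv.swap_apply_apply _ _ _).symm
  rw [Equiv.swap_inv] at key
  rw [key, Equiv.swap_apply_of_ne_of_ne h1 h2, Equiv.swap_apply_of_ne_of_ne h3 h4]

lemma swap_comm'' {n : ℕ} {a b c d : Fin n} (h1 : c ≠ a) (h2 : c ≠ b) (h3 : d ≠ a) (h4 : d ≠ b) :
    Equiv.swap a b * Equiv.swap c d * (Equiv.swap a b)⁻¹ * (Equiv.swap c d)⁻¹ = 1 := by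
  rw [Equiv.swap_inv, Equiv.swap_inv]
  rw [show Equiv.swap a b * Equiv.swap c d * Equiv.swap a b * Equiv.swap c d
      = (Equiv.swap a b * Equiv.swap c d * Equiv.swap a b) * Equiv.swap c d by group,
    swap_conj' a b c d h1 h2 h3 h4, Equiv.swap_mul_self]

lemma swap_braid' {n : ℕ} {a b c : Fin n} (hab : a ≠ b) (hbc : b ≠ c) (hac : a ≠ c) :
    Equiv.swap a b * Equiv.swap b c * Equiv.swap a b
      = Equiv.swap b c * Equiv.swap a b * Equiv.swap b c := by
  have L : Equiv.swap a b * Equiv.swap b c * (Equiv.swap a b)⁻¹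
      = Equiv.swap (Equiv.swap a b b) (Equiv.swap a b c) := (Equiv.swap_apply_apply _ _ _).symm
  have R : Equiv.swap b c * Equiv.swap a b * (Equiv.swap b c)⁻¹
      = Equiv.swap (Equiv.swap b c a) (Equiv.swap b c b) := (Equiv.swap_apply_apply _ _ _).symm
  rw [Equiv.swap_inv] at L R
  rw [L, R, Equiv.swap_apply_right, Equiv.swap_apply_of_ne_of_ne hac.symm hbc.symm,
    Equiv.swap_apply_of_ne_of_ne hab hac, Equiv.swap_apply_left]

/-- `i`-th basepoint in `Fin (m+3)`. -/
def gA {m : ℕ} (i : Fin (m + 2)) : Fin (m + 3) := ⟨i.1, Nat.lt_succ_of_lt i.2⟩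

def gB {m : ℕ} (i : Fin (m + 2)) : Fin (m + 3) := ⟨i.1 + 1, Nat.succ_lt_succ i.2⟩

/-- The adjacent transposition associated to a generator index. -/
def sw {m : ℕ} (i : Fin (m + 2)) : Equiv.Perm (Fin (m + 3)) := Equiv.swap (gA i) (gB i)

lemma sw_comm {m : ℕ} {i j : Fin (m + 2)} (h : i.1 + 2 ≤ j.1 ∨ j.1 + 2 ≤ i.1) :
    sw i * sw j * (sw i)⁻¹ * (sw j)⁻¹ = 1 := by
  unfold sw
  apply swap_comm'' <;> (simp only [gA, gB, ne_eq, Fin.mk.injEq] <;> omega)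

lemma sw_braid {m : ℕ} {i j : Fin (m + 2)} (h : j.1 = i.1 + 1) :
    sw i * sw j * sw i * (sw j * sw i * sw j)⁻¹ = 1 := by
  have hb : gA j = gB i := Fin.ext (by simp [gA, gB, h])
  rw [mul_inv_eq_one]
  unfold sw
  rw [hb]
  exact swap_braid' (by simp only [gA, gB, ne_eq, Fin.mk.injEq]; omega)
    (by simp only [gA, gB, ne_eq, Fin.mk.injEq]; omega)
    (by simp only [gA, gB, ne_eq, Fin.mk.injEq]; omega)

lemma sw_pow_ne_one {m : ℕ} {i j : Fin (m + 2)} (h : j.1 = i.1 + 1) :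
    sw i * sw j * sw i * sw j ≠ 1 := by
  intro he
  have hb : gA j = gB i := Fin.ext (by simp [gA, gB, h])
  have e1 : sw j (gA i) = gA i := by
    apply Equiv.swap_apply_of_ne_of_ne <;> (simp only [gA, gB, ne_eq, Fin.mk.injEq] <;> omega)
  have e2 : sw i (gA i) = gB i := Equiv.swap_apply_left _ _
  have e3 : sw j (gB i) = gB j := by rw [← hb]; exact Equiv.swap_apply_left _ _
  have e4 : sw i (gB j) = gB j := by
    apply Equiv.swap_apply_of_ne_of_ne <;> (simp only [gA, gB, ne_eq, Fin.mk.injEq] <;> omega)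
  have := congrArg (fun σ : Equiv.Perm (Fin (m + 3)) => σ (gA i)) he
  simp only [Equiv.Perm.mul_apply, Equiv.Perm.one_apply, e1, e2, e3, e4] at this
  have := congrArg Fin.val this
  simp only [gA, gB] at this
  omega

/-- The map on generators of the permutation representation. -/
def mvtF {m k : ℕ} : MVTGen (m + 1) k → Equiv.Perm (Fin (m + 3))
  | MVTGen.s i => sw i
  | MVTGen.rho i _ => sw i

lemma mvt_rels_perm (m k : ℕ) :
    ∀ r ∈ mvtRels (m + 1) k, FreeGroup.lift (mvtF (m := m) (k := k)) r = 1 := by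
  rintro r (⟨i, rfl⟩ | ⟨i, j, hij, rfl⟩ | ⟨i, α, rfl⟩ | ⟨i, j, α, β, hij, rfl⟩ |
    ⟨i, j, α, hij, rfl⟩ | ⟨i, j, α, hji, rfl⟩ | ⟨i, j, α, β, hji, hab, rfl⟩ |
    ⟨i, j, α, β, hji, hab, rfl⟩ | ⟨i, j, α, hji, rfl⟩) <;>
    simp only [map_mul, map_inv, FreeGroup.lift_apply_of, mvtF]
  · exact Equiv.swap_mul_self _ _
  · exact sw_comm hij
  · exact Equiv.swap_mul_self _ _
  · exact sw_comm hij
  · exact sw_comm hij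
  · exact sw_braid hji
  · exact sw_braid hji
  · exact sw_braid hji
  · exact sw_braid hji

lemma locMat_s_diag (n i : ℕ) :
    locMat n i 1 0 0 (-1)
      = Matrix.diagonal (fun p : Fin n => if p.1 = i + 1 then (-1 : ℂ) else 1) := by
  ext p q
  rcases eq_or_ne p q with rfl | hpq
  · simp only [locMat, Matrix.of_apply, Matrix.diagonal_apply_eq]
    split_ifs <;> first | rfl | omega
  · have h' : p.1 ≠ q.1 := fun h => hpq (Fin.ext h)
    simp only [locMat, Matrix.of_apply, Matrix.diagonal_apply_ne _ hpq]
    split_ifs <;> first | rfl | omega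

end Aux

/-- For the 2-local representation `ζ₃` of `M_{k+1}VT_{m+3}` (with `sᵢ ↦` identity except
block `diag(1, -1)` and `ρᵢ^α ↦` identity except block `[[0, 1/y_α],[y_α, 0]]`), every
element `sᵢ s_{i+1} sᵢ s_{i+1}` lies in the kernel of `ζ₃` but is nontrivial in
`M_{k+1}VT_{m+3}`; hence `ζ₃` is not injective. -/

theorem mvt_zeta3_unfaithful (m k : ℕ) (y : Fin (k + 1) → ℂ) (hy : ∀ α, y α ≠ 0)
    (ζ : MVT (m + 1) k →* GL (Fin (m + 3)) ℂ)
    (hs : ∀ i : Fin (m + 2),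
      ((ζ (MVT.gen (MVTGen.s i)) : GL (Fin (m + 3)) ℂ) :
        Matrix (Fin (m + 3)) (Fin (m + 3)) ℂ) = locMat (m + 3) i.1 1 0 0 (-1))
    (hr : ∀ (i : Fin (m + 2)) (α : Fin (k + 1)),
      ((ζ (MVT.gen (MVTGen.rho i α)) : GL (Fin (m + 3)) ℂ) :
        Matrix (Fin (m + 3)) (Fin (m + 3)) ℂ) = locMat (m + 3) i.1 0 (y α)⁻¹ (y α) 0) :
    (∀ i j : Fin (m + 2), j.1 = i.1 + 1 →
      ζ ((MVT.gen (MVTGen.s i) : MVT (m + 1) k) * MVT.gen (MVTGen.s j) *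
          MVT.gen (MVTGen.s i) * MVT.gen (MVTGen.s j)) = 1 ∧
      (MVT.gen (MVTGen.s i) : MVT (m + 1) k) * MVT.gen (MVTGen.s j) *
          MVT.gen (MVTGen.s i) * MVT.gen (MVTGen.s j) ≠ 1) ∧
    ¬ Function.Injective ζ := by
  have main : ∀ i j : Fin (m + 2), j.1 = i.1 + 1 →
      ζ ((MVT.gen (MVTGen.s i) : MVT (m + 1) k) * MVT.gen (MVTGen.s j) *
          MVT.gen (MVTGen.s i) * MVT.gen (MVTGen.s j)) = 1 ∧
      (MVT.gen (MVTGen.s i) : MVT (m + 1) k) * MVT.gen (MVTGen.s j) *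
          MVT.gen (MVTGen.s i) * MVT.gen (MVTGen.s j) ≠ 1 := by
    intro i j hji
    constructor
    · -- kernel part
      apply Units.ext
      rw [Units.val_one, map_mul, map_mul, map_mul, Units.val_mul, Units.val_mul,
        Units.val_mul, hs, hs, locMat_s_diag, locMat_s_diag,
        Matrix.diagonal_mul_diagonal, Matrix.diagonal_mul_diagonal,
        Matrix.diagonal_mul_diagonal]
      ext p q
      rcases eq_or_ne p q with rfl | hpq
      · rw [Matrix.diagonal_apply_eq, Matrix.one_apply_eq]
        split_ifs <;> norm_num
      · rw [Matrix.diagonal_apply_ne _ hpq, Matrix.one_apply_ne hpq]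
    · -- nontriviality
      intro he
      have he' : (PresentedGroup.of (MVTGen.s i) * PresentedGroup.of (MVTGen.s j) *
          PresentedGroup.of (MVTGen.s i) * PresentedGroup.of (MVTGen.s j) :
          PresentedGroup (mvtRels (m + 1) k)) = 1 := he
      have hφ := congrArg (PresentedGroup.toGroup (mvt_rels_perm m k)) he'
      rw [map_one, map_mul, map_mul, map_mul, PresentedGroup.toGroup.of,
        PresentedGroup.toGroup.of] at hφ
      exact sw_pow_ne_one hji hφ
  refine ⟨main, ?_⟩
  intro hinj
  have h01 : ((⟨1, by omega⟩ : Fin (m + 2)) : ℕ) = (⟨0, by omega⟩ : Fin (m + 2)).1 + 1 := rfl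
  obtain ⟨hker, hne⟩ := main ⟨0, by omega⟩ ⟨1, by omega⟩ h01
  exact hne (hinj (by rw [map_one]; exact hker))
end
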